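/- Let P be a regular n×n complex matrix polynomial of degree d, let ℓ ≥ 1 divide d, let ℒ(λ) be an (ε,n,η,n)-block Kronecker ℓ-ification of P built from a solution M(λ) of (Λ_η(λ^ℓ)^T ⊗ I_n) M(λ) (Λ_ε(λ^ℓ) ⊗ I_n) = P(λ), and let λ0 ∈ ℂ be a simple nonzero eigenvalue of P, i.e., λ0 ≠ 0 and λ0 is a root of det P(λ) of multiplicity exactly 1. Let x, y ∈ ℂ^n be nonzero with P(λ0) x = 0 and y* P(λ0) = 0, and set z = G(λ0; ε, η, M) x and w = [conj(λ0)^{εℓ} (Λ_η(conj(λ0)^ℓ) ⊗ I_n) ; −S_ε(conj(λ0)^ℓ) M(λ0)* (Λ_η(conj(λ0)^ℓ) ⊗ I_n)] y. Then z and w are nonzero, ℒ(λ0) z = 0, w* ℒ(λ0) = 0, and |w* ℒ′(λ0) z| = |λ0|^{d−ℓ} |y* P′(λ0) x|, where ℒ′ and P′ denote entrywise derivatives, (·)* the conjugate transpose, and conj(λ0) the complex conjugate of λ0. -/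

import Mathlib

open Matrix BigOperators

noncomputable section

/-- Evaluation at `x` of the matrix polynomial with coefficients `C 0, …, C N`. -/
def mpEval {α β : Type*} (N : ℕ) (C : ℕ → Matrix α β ℂ) (x : ℂ) : Matrix α β ℂ :=
  ∑ i ∈ Finset.range (N + 1), x ^ i • C i

/-- Entrywise derivative of the matrix polynomial, evaluated at `x`. -/
def mpDer {α β : Type*} (N : ℕ) (C : ℕ → Matrix α β ℂ) (x : ℂ) : Matrix α β ℂ :=
  ∑ i ∈ Finset.range (N + 1), ((i : ℂ) * x ^ (i - 1)) • C i

/-- Spectral norm (operator 2-norm, i.e. largest singular value) of a complex matrix. -/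
def sNorm {α β : Type*} [Fintype α] [Fintype β] [DecidableEq β] (A : Matrix α β ℂ) : ℝ :=
  ‖LinearMap.toContinuousLinearMap (Matrix.toEuclideanLin A)‖

/-- Euclidean norm of a complex vector. -/
def vNorm {α : Type*} [Fintype α] (v : α → ℂ) : ℝ :=
  Real.sqrt (∑ i, ‖v i‖ ^ 2)

/-- `Λ_k(x^ℓ) ⊗ I_n`, a `(k+1)n × n` matrix whose `i`-th (0-based) `n × n` block is
`x^(ℓ(k−i)) I_n`. -/
def LamI (n k l : ℕ) (x : ℂ) : Matrix (Fin (k + 1) × Fin n) (Fin n) ℂ :=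
  Matrix.of fun p s => if p.2 = s then x ^ (l * (k - (p.1 : ℕ))) else 0

/-- `L_k(x^ℓ) ⊗ I_n`, a `kn × (k+1)n` matrix. -/
def LkI (n k l : ℕ) (x : ℂ) : Matrix (Fin k × Fin n) (Fin (k + 1) × Fin n) ℂ :=
  Matrix.of fun p q =>
    if p.2 = q.2 then
      if (q.1 : ℕ) = (p.1 : ℕ) then -1
      else if (q.1 : ℕ) = (p.1 : ℕ) + 1 then x ^ l else 0
    else 0

/-- The degree-`0` coefficient of `L_k(λ^ℓ) ⊗ I_n`. -/
def LkI0 (n k : ℕ) : Matrix (Fin k × Fin n) (Fin (k + 1) × Fin n) ℂ :=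
  Matrix.of fun p q => if p.2 = q.2 ∧ (q.1 : ℕ) = (p.1 : ℕ) then -1 else 0

/-- The degree-`ℓ` coefficient of `L_k(λ^ℓ) ⊗ I_n`. -/
def LkI1 (n k : ℕ) : Matrix (Fin k × Fin n) (Fin (k + 1) × Fin n) ℂ :=
  Matrix.of fun p q => if p.2 = q.2 ∧ (q.1 : ℕ) = (p.1 : ℕ) + 1 then 1 else 0

/-- `R_k(x^ℓ)`: `n × n` blocks `x^(ℓ(i−j)) I_n` for `j ≤ i` (0-based), `0` otherwise. -/
def Rmat (n k l : ℕ) (x : ℂ) : Matrix (Fin k × Fin n) (Fin (k + 1) × Fin n) ℂ :=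
  Matrix.of fun p q =>
    if p.2 = q.2 ∧ (q.1 : ℕ) ≤ (p.1 : ℕ) then x ^ (l * ((p.1 : ℕ) - (q.1 : ℕ))) else 0

/-- `S_k(x^ℓ)`: `n × n` blocks `x^(ℓ(k+i−j)) I_n` for `i < j` (0-based), `0` otherwise. -/
def Smat (n k l : ℕ) (x : ℂ) : Matrix (Fin k × Fin n) (Fin (k + 1) × Fin n) ℂ :=
  Matrix.of fun p q =>
    if p.2 = q.2 ∧ (p.1 : ℕ) < (q.1 : ℕ) then x ^ (l * (k + (p.1 : ℕ) - (q.1 : ℕ))) else 0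

/-- The block column `H(x; p, q, N) = [Λ_p(x^ℓ) ⊗ I_n ; R_q(x^ℓ) N(x) (Λ_p(x^ℓ) ⊗ I_n)]`. -/
def Hmat (n l p q : ℕ) (N : ℂ → Matrix (Fin (q + 1) × Fin n) (Fin (p + 1) × Fin n) ℂ)
    (x : ℂ) : Matrix ((Fin (p + 1) × Fin n) ⊕ (Fin q × Fin n)) (Fin n) ℂ :=
  Matrix.of fun r c =>
    Sum.elim (fun a => LamI n p l x a c)
      (fun a => (Rmat n q l x * (N x * LamI n p l x)) a c) r

/-- The block column `G(x; p, q, N) = [x^(qℓ)(Λ_p(x^ℓ) ⊗ I_n) ; −S_q(x^ℓ) N(x) (Λ_p(x^ℓ) ⊗ I_n)]`. -/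
def Gmat (n l p q : ℕ) (N : ℂ → Matrix (Fin (q + 1) × Fin n) (Fin (p + 1) × Fin n) ℂ)
    (x : ℂ) : Matrix ((Fin (p + 1) × Fin n) ⊕ (Fin q × Fin n)) (Fin n) ℂ :=
  Matrix.of fun r c =>
    Sum.elim (fun a => x ^ (q * l) * LamI n p l x a c)
      (fun a => (-(Smat n q l x * (N x * LamI n p l x))) a c) r

/-- Coefficients of the `(ε,n,η,n)`-block Kronecker `ℓ`-ification
`ℒ(λ) = [[M(λ), L_η(λ^ℓ)ᵀ ⊗ I_n], [L_ε(λ^ℓ) ⊗ I_n, 0]]`. -/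
def LcalCoef (n l ε η : ℕ)
    (M : ℕ → Matrix (Fin (η + 1) × Fin n) (Fin (ε + 1) × Fin n) ℂ) (i : ℕ) :
    Matrix ((Fin (η + 1) × Fin n) ⊕ (Fin ε × Fin n))
      ((Fin (ε + 1) × Fin n) ⊕ (Fin η × Fin n)) ℂ :=
  Matrix.fromBlocks (M i)
    (if i = 0 then (LkI0 n η)ᵀ else if i = l then (LkI1 n η)ᵀ else 0)
    (if i = 0 then LkI0 n ε else if i = l then LkI1 n ε else 0) 0

/-- `det P(λ)` as a scalar polynomial, where `P(λ) = Σ_{i=0}^d A_i λ^i`. -/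
def detPoly (n d : ℕ) (A : ℕ → Matrix (Fin n) (Fin n) ℂ) : Polynomial ℂ :=
  (∑ i ∈ Finset.range (d + 1), (Polynomial.X : Polynomial ℂ) ^ i • (A i).map Polynomial.C).det

/-- The horizontal concatenation `[A_0 A_1 ⋯ A_d]`. -/
def rowConcat (n d : ℕ) (A : ℕ → Matrix (Fin n) (Fin n) ℂ) :
    Matrix (Fin n) (Fin (d + 1) × Fin n) ℂ :=
  Matrix.of fun r q => A (q.1 : ℕ) r q.2

/-- Coefficientwise eigenvalue condition number of `Q(λ) = Σ_{i=0}^N C_i λ^i` at the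
eigentriple `(v, x0, u)`. -/
def coeffCond {α β : Type*} [Fintype α] [Fintype β] [DecidableEq β] (N : ℕ)
    (C : ℕ → Matrix α β ℂ) (x0 : ℂ) (u : β → ℂ) (v : α → ℂ) : ℝ :=
  (∑ i ∈ Finset.range (N + 1), ‖x0‖ ^ i * sNorm (C i)) * vNorm u * vNorm v /
    (‖x0‖ * ‖dotProduct (star v) ((mpDer N C x0).mulVec u)‖)

/-- Normwise eigenvalue condition number of `P(λ) = Σ_{i=0}^d A_i λ^i` at `(y, x0, x)`. -/
def normCond (n d : ℕ) (A : ℕ → Matrix (Fin n) (Fin n) ℂ) (x0 : ℂ)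
    (x y : Fin n → ℂ) : ℝ :=
  sNorm (rowConcat n d A) * (∑ i ∈ Finset.range (d + 1), ‖x0‖ ^ i) *
      vNorm x * vNorm y /
    (‖x0‖ * ‖dotProduct (star y) ((mpDer d A x0).mulVec x)‖)

/-- Each `n × n` block of each coefficient `M_t`, `t = 0, …, ℓ`, is `0`, `I_n`,
or one of the coefficients `A_s` of `P`.  -/
def IsCompanionM (n d l ε η : ℕ) (A : ℕ → Matrix (Fin n) (Fin n) ℂ)
    (M : ℕ → Matrix (Fin (η + 1) × Fin n) (Fin (ε + 1) × Fin n) ℂ) : Prop :=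
  ∀ t ≤ l, ∀ (i : Fin (η + 1)) (j : Fin (ε + 1)),
    (Matrix.of fun r s => M t (i, r) (j, s)) = 0 ∨
    (Matrix.of fun r s => M t (i, r) (j, s)) = (1 : Matrix (Fin n) (Fin n) ℂ) ∨
    ∃ s ≤ d, (Matrix.of fun r s' => M t (i, r) (j, s')) = A s


section Aux
variable {R S : Type*} [CommRing R] [CommRing S]

def lamR (n k l : ℕ) (u : R) : Matrix (Fin (k + 1) × Fin n) (Fin n) R :=
  Matrix.of fun p s => if p.2 = s then u ^ (l * (k - (p.1 : ℕ))) else 0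
def lkRg (n k l : ℕ) (u : R) : Matrix (Fin k × Fin n) (Fin (k + 1) × Fin n) R :=
  Matrix.of fun p q =>
    if p.2 = q.2 then
      if (q.1 : ℕ) = (p.1 : ℕ) then -1
      else if (q.1 : ℕ) = (p.1 : ℕ) + 1 then u ^ l else 0
    else 0
def sRg (n k l : ℕ) (u : R) : Matrix (Fin k × Fin n) (Fin (k + 1) × Fin n) R :=
  Matrix.of fun p q =>
    if p.2 = q.2 ∧ (p.1 : ℕ) < (q.1 : ℕ) then u ^ (l * (k + (p.1 : ℕ) - (q.1 : ℕ))) else 0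
def cmg (n k : ℕ) : Matrix (Fin (k + 1) × Fin n) (Fin n) R :=
  Matrix.of fun p s => if (p.1 : ℕ) = 0 ∧ p.2 = s then 1 else 0

lemma fin_sum_val {M : Type*} [AddCommMonoid M] {m : ℕ} (c : ℕ) (g : Fin m → M) :
    ∑ i : Fin m, (if (i : ℕ) = c then g i else 0) =
      if h : c < m then g ⟨c, h⟩ else 0 := by
  split_ifs with h
  · rw [Finset.sum_eq_single ⟨c, h⟩]
    · simp
    · intro i _ hne; rw [if_neg]; intro hc; exact hne (Fin.ext hc)
    · simp
  · refine Finset.sum_eq_zero fun i _ => ?_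
    rw [if_neg]; have := i.isLt; omega


lemma fin_sum_val_pred {M : Type*} [AddCommMonoid M] {m : ℕ} (c : ℕ) (g : Fin m → M) :
    ∑ i : Fin m, (if (i : ℕ) + 1 = c then g i else 0) =
      if h : 0 < c ∧ c - 1 < m then g ⟨c - 1, h.2⟩ else 0 := by
  split_ifs with h
  · rw [Finset.sum_eq_single ⟨c - 1, h.2⟩]
    · rw [if_pos (by simp; omega)]
    · intro i _ hne; rw [if_neg]; intro hc; exact hne (Fin.ext (by simp; omega))
    · simp
  · refine Finset.sum_eq_zero fun i _ => ?_
    rw [if_neg]; have := i.isLt; omega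


lemma lk_mul_lam (n k l : ℕ) (u : R) : lkRg n k l u * lamR n k l u = 0 := by
  ext ⟨i, r⟩ s
  rw [Matrix.mul_apply, Fintype.sum_prod_type]
  have hcol : ∀ j : Fin (k + 1),
      ∑ t : Fin n, lkRg n k l u (i, r) (j, t) * lamR n k l u (j, t) s =
        (if (j : ℕ) = (i : ℕ) then
            (-1) * (if r = s then u ^ (l * (k - (j : ℕ))) else 0) else 0) +
        (if (j : ℕ) = (i : ℕ) + 1 then
            u ^ l * (if r = s then u ^ (l * (k - (j : ℕ))) else 0) else 0) := by
    intro j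
    have : ∀ t : Fin n, lkRg n k l u (i, r) (j, t) * lamR n k l u (j, t) s =
        if r = t then
          ((if (j : ℕ) = (i : ℕ) then (-1:R)
            else if (j : ℕ) = (i : ℕ) + 1 then u ^ l else 0) *
           (if t = s then u ^ (l * (k - (j : ℕ))) else 0)) else 0 := by
      intro t
      simp only [lkRg, lamR, Matrix.of_apply]
      by_cases h : r = t <;> simp [h]
    rw [Finset.sum_congr rfl fun t _ => this t, Finset.sum_ite_eq]
    simp only [Finset.mem_univ, if_true]
    by_cases h1 : (j : ℕ) = (i : ℕ) <;> by_cases h2 : (j : ℕ) = (i : ℕ) + 1 <;>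
      simp [h1, h2] <;> omega
  rw [Finset.sum_congr rfl fun j _ => hcol j, Finset.sum_add_distrib,
    fin_sum_val, fin_sum_val]
  have h1 : (i : ℕ) < k + 1 := by omega
  have h2 : (i : ℕ) + 1 < k + 1 := by have := i.isLt; omega
  rw [dif_pos h1, dif_pos h2]
  simp only [Matrix.zero_apply]
  by_cases hrs : r = s
  · simp only [hrs, if_true]
    have hk : k - (i : ℕ) = (k - ((i : ℕ) + 1)) + 1 := by have := i.isLt; omega
    rw [hk, Nat.mul_add, mul_one, pow_add]
    ring
  · simp [hrs]


lemma hp1 (u : R) (l a b : ℕ) (h : a = b) : u ^ (l * a) = u ^ (l * b) := by rw [h]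

lemma hp2 (u : R) (l a b : ℕ) (h : a + 1 = b) : u ^ l * u ^ (l * a) = u ^ (l * b) := by
  subst h; rw [← pow_add]; congr 1; ring

lemma lkT_mul_s (n k l : ℕ) (u : R) :
    (lkRg n k l u)ᵀ * sRg n k l u =
      u ^ (k * l) • (1 : Matrix (Fin (k + 1) × Fin n) (Fin (k + 1) × Fin n) R) -
        (cmg n k : Matrix (Fin (k + 1) × Fin n) (Fin n) R) * (lamR n k l u)ᵀ := by
  ext ⟨j, t⟩ ⟨j', t'⟩
  rw [Matrix.mul_apply, Fintype.sum_prod_type]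
  have hcol : ∀ i : Fin k,
      ∑ r : Fin n, (lkRg n k l u)ᵀ (j, t) (i, r) * sRg n k l u (i, r) (j', t') =
        (if ((i : ℕ)) = (j : ℕ) then
          (-1) * (if t = t' ∧ (i : ℕ) < (j' : ℕ) then u ^ (l * (k + (i:ℕ) - (j':ℕ))) else 0) else 0) +
        (if ((i : ℕ)) + 1 = (j : ℕ) then
          u ^ l * (if t = t' ∧ (i : ℕ) < (j' : ℕ) then u ^ (l * (k + (i:ℕ) - (j':ℕ))) else 0) else 0) := by
    intro i
    have : ∀ r : Fin n, (lkRg n k l u)ᵀ (j, t) (i, r) * sRg n k l u (i, r) (j', t') =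
        if r = t then
          ((if (j : ℕ) = (i : ℕ) then (-1:R)
            else if (j : ℕ) = (i : ℕ) + 1 then u ^ l else 0) *
           (if r = t' ∧ (i : ℕ) < (j' : ℕ) then u ^ (l * (k + (i:ℕ) - (j':ℕ))) else 0)) else 0 := by
      intro r
      simp only [lkRg, sRg, Matrix.transpose_apply, Matrix.of_apply]
      by_cases h : r = t <;> simp [h]
    rw [Finset.sum_congr rfl fun r _ => this r, Finset.sum_ite_eq']
    simp only [Finset.mem_univ, if_true]
    by_cases h1 : (j : ℕ) = (i : ℕ) <;> by_cases h2 : (j : ℕ) = (i : ℕ) + 1 <;>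
      simp [h1, h2, eq_comm] <;> omega
  rw [Finset.sum_congr rfl fun i _ => hcol i, Finset.sum_add_distrib,
    fin_sum_val, fin_sum_val_pred]
  simp only [Matrix.sub_apply, Matrix.smul_apply, Matrix.one_apply, Matrix.mul_apply,
    cmg, lamR, Matrix.transpose_apply, Matrix.of_apply, smul_eq_mul, Prod.mk.injEq]
  have hrhs2 : ∑ s : Fin n,
      (if (j : ℕ) = 0 ∧ t = s then (1:R) else 0) *
        (if t' = s then u ^ (l * (k - (j' : ℕ))) else 0) =
      if (j : ℕ) = 0 ∧ t = t' then u ^ (l * (k - (j' : ℕ))) else 0 := by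
    by_cases hj : (j : ℕ) = 0
    · by_cases htt : t = t'
      · rw [Finset.sum_eq_single t]
        · simp [hj, htt]
        · intro b _ hb; rw [if_neg, zero_mul]; tauto
        · simp
      · refine (Finset.sum_eq_zero fun s _ => ?_).trans (by simp [hj, htt])
        by_cases hts : t = s <;> by_cases ht's : t' = s <;> simp_all
    · simp [hj]
  rw [hrhs2]
  have hj'le : (j' : ℕ) ≤ k := by have := j'.isLt; omega
  have hjle : (j : ℕ) ≤ k := by have := j.isLt; omega
  by_cases htt : t = t'
  · subst htt
    simp only [eq_self_iff_true, and_true, true_and, Fin.ext_iff]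
    split_ifs <;> try (exfalso; omega)
    all_goals rw [Nat.mul_comm k l]
    all_goals first
      | ring1
      | (rw [show u ^ (l*(k-(j':ℕ))) = u ^ (l*k) from hp1 u l _ _ (by omega)]; ring1)
      | (rw [show u^l * u^(l*(k+((j:ℕ)-1)-(j':ℕ))) = u^(l*k) from hp2 u l _ _ (by omega)]; ring1)
      | (rw [show u^l * u^(l*(k+((j:ℕ)-1)-(j':ℕ))) = u^(l*(k+(j:ℕ)-(j':ℕ))) from hp2 u l _ _ (by omega)]; ring1)
      | (rw [show u ^ (l*(k+(j:ℕ)-(j':ℕ))) = u ^ (l*(k-(j':ℕ))) from hp1 u l _ _ (by omega)]; ring1)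
  · have h4 : ¬(j = j' ∧ t = t') := by tauto
    simp only [htt, and_false, false_and, if_false, if_neg h4]
    simp

lemma gid (n l p q : ℕ) (u : R) (B : Matrix (Fin (q+1) × Fin n) (Fin (p+1) × Fin n) R) :
    Matrix.fromBlocks B (lkRg n q l u)ᵀ (lkRg n p l u) 0 *
      Matrix.fromRows (u ^ (q*l) • lamR n p l u) (-(sRg n q l u * (B * lamR n p l u))) =
    Matrix.fromRows ((cmg n q : Matrix (Fin (q + 1) × Fin n) (Fin n) R) * ((lamR n q l u)ᵀ * (B * lamR n p l u))) 0 := by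
  rw [Matrix.fromBlocks_mul_fromRows]
  have htop : B * (u ^ (q*l) • lamR n p l u) +
      (lkRg n q l u)ᵀ * -(sRg n q l u * (B * lamR n p l u)) =
      (cmg n q : Matrix (Fin (q + 1) × Fin n) (Fin n) R) * ((lamR n q l u)ᵀ * (B * lamR n p l u)) := by
    rw [Matrix.mul_smul, Matrix.mul_neg, ← Matrix.mul_assoc ((lkRg n q l u)ᵀ), lkT_mul_s,
      Matrix.sub_mul, Matrix.smul_mul, Matrix.one_mul, neg_sub, Matrix.mul_assoc]
    abel1
  have hbot : lkRg n p l u * (u ^ (q*l) • lamR n p l u) +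
      (0 : Matrix (Fin p × Fin n) (Fin q × Fin n) R) * -(sRg n q l u * (B * lamR n p l u)) = 0 := by
    rw [Matrix.mul_smul, lk_mul_lam, smul_zero, Matrix.zero_mul, add_zero]
  rw [htop, hbot]

lemma lamR_map (n k l : ℕ) (u : R) (φ : R →+* S) :
    (lamR n k l u).map φ = lamR n k l (φ u) := by
  ext p s; simp [lamR, Matrix.map_apply, apply_ite φ, map_pow]

lemma lkRg_map (n k l : ℕ) (u : R) (φ : R →+* S) :
    (lkRg n k l u).map φ = lkRg n k l (φ u) := by
  ext p q; simp [lkRg, Matrix.map_apply, apply_ite φ, map_pow]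

lemma sRg_map (n k l : ℕ) (u : R) (φ : R →+* S) :
    (sRg n k l u).map φ = sRg n k l (φ u) := by
  ext p q; simp [sRg, Matrix.map_apply, apply_ite φ, map_pow]

lemma cmg_map (n k : ℕ) (φ : R →+* S) :
    (cmg n k : Matrix _ _ R).map φ = cmg n k := by
  ext p s; simp [cmg, Matrix.map_apply, apply_ite φ]

lemma fromRows_map {m₁ m₂ β : Type*} (A : Matrix m₁ β R) (B : Matrix m₂ β R) (φ : R → S) :
    (Matrix.fromRows A B).map φ = Matrix.fromRows (A.map φ) (B.map φ) := by
  ext (i | i) j <;> rfl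

lemma mmap_add {α β : Type*} (φ : R →+* S) (A B : Matrix α β R) :
    (A + B).map φ = A.map φ + B.map φ := by
  ext i j; simp [Matrix.map_apply]

lemma mmap_neg {α β : Type*} (φ : R →+* S) (A : Matrix α β R) :
    (-A).map φ = -(A.map φ) := by
  ext i j; simp [Matrix.map_apply]

lemma mmap_smul {α β : Type*} (φ : R →+* S) (c : R) (A : Matrix α β R) :
    (c • A).map φ = φ c • A.map φ := by
  ext i j; simp [Matrix.map_apply, Matrix.smul_apply, smul_eq_mul]


section PolyAux

open Polynomial

def pmat {α β : Type*} (N : ℕ) (Cf : ℕ → Matrix α β ℂ) : Matrix α β (Polynomial ℂ) :=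
  ∑ i ∈ Finset.range (N + 1), (Polynomial.X : Polynomial ℂ) ^ i • (Cf i).map Polynomial.C

def dmat {α β : Type*} (A : Matrix α β (Polynomial ℂ)) : Matrix α β (Polynomial ℂ) :=
  Matrix.of fun i j => Polynomial.derivative (A i j)

lemma dmat_zero {α β : Type*} : dmat (0 : Matrix α β (Polynomial ℂ)) = 0 := by
  ext i j; simp [dmat]

lemma dmat_transpose {α β : Type*} (A : Matrix α β (Polynomial ℂ)) :
    dmat Aᵀ = (dmat A)ᵀ := rfl

lemma dmat_mul {α β γ : Type*} [Fintype γ] (A : Matrix α γ (Polynomial ℂ))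
    (B : Matrix γ β (Polynomial ℂ)) :
    dmat (A * B) = dmat A * B + A * dmat B := by
  ext i j
  simp [dmat, Matrix.mul_apply, Matrix.add_apply, Polynomial.derivative_mul,
    Finset.sum_add_distrib]

lemma dmat_fromRows {m₁ m₂ β : Type*} (A : Matrix m₁ β (Polynomial ℂ))
    (B : Matrix m₂ β (Polynomial ℂ)) :
    dmat (Matrix.fromRows A B) = Matrix.fromRows (dmat A) (dmat B) := by
  ext (i | i) j <;> rfl

lemma dmat_fromBlocks {m₁ m₂ n₁ n₂ : Type*} (A : Matrix m₁ n₁ (Polynomial ℂ))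
    (B : Matrix m₁ n₂ (Polynomial ℂ)) (C : Matrix m₂ n₁ (Polynomial ℂ))
    (D : Matrix m₂ n₂ (Polynomial ℂ)) :
    dmat (Matrix.fromBlocks A B C D) =
      Matrix.fromBlocks (dmat A) (dmat B) (dmat C) (dmat D) := by
  ext (i | i) (j | j) <;> rfl

lemma dmat_cmg (n k : ℕ) : dmat (cmg n k : Matrix _ _ (Polynomial ℂ)) = 0 := by
  ext p s; simp [dmat, cmg, apply_ite Polynomial.derivative]

lemma pmat_map {α β : Type*} (N : ℕ) (Cf : ℕ → Matrix α β ℂ) (t : ℂ) :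
    (pmat N Cf).map (Polynomial.evalRingHom t) = mpEval N Cf t := by
  ext i j
  simp only [pmat, mpEval, Matrix.map_apply, Matrix.sum_apply, Matrix.smul_apply,
    smul_eq_mul, map_sum]
  refine Finset.sum_congr rfl fun k _ => ?_
  simp [Matrix.map_apply]
  ring

lemma pmat_dmat_map {α β : Type*} (N : ℕ) (Cf : ℕ → Matrix α β ℂ) (t : ℂ) :
    (dmat (pmat N Cf)).map (Polynomial.evalRingHom t) = mpDer N Cf t := by
  ext i j
  simp only [pmat, mpDer, dmat, Matrix.map_apply, Matrix.of_apply, Matrix.sum_apply,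
    Matrix.smul_apply, smul_eq_mul, map_sum]
  refine Finset.sum_congr rfl fun k _ => ?_
  simp [Matrix.map_apply, Polynomial.derivative_mul, Polynomial.derivative_X_pow]
  ring

lemma mat_funext {α β : Type*} (A B : Matrix α β (Polynomial ℂ))
    (h : ∀ t : ℂ, A.map (Polynomial.evalRingHom t) = B.map (Polynomial.evalRingHom t)) :
    A = B := by
  refine Matrix.ext fun i j => ?_
  apply Polynomial.funext
  intro t
  have h2 : (A.map (Polynomial.evalRingHom t)) i j = (B.map (Polynomial.evalRingHom t)) i j := by
    rw [h t]
  simpa [Matrix.map_apply] using h2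

lemma dmat_lk_map (n k l : ℕ) (μ : ℂ) :
    (dmat (lkRg n k l (Polynomial.X : Polynomial ℂ))).map (Polynomial.evalRingHom μ) =
      ((l:ℂ) * μ^(l-1)) • (LkI1 n k) := by
  ext ⟨i, r⟩ ⟨j, s⟩
  simp only [dmat, lkRg, LkI1, Matrix.map_apply, Matrix.of_apply, Matrix.smul_apply,
    smul_eq_mul]
  by_cases h1 : r = s <;> by_cases h2 : (j:ℕ) = (i:ℕ) <;> by_cases h3 : (j:ℕ) = (i:ℕ)+1 <;>
    simp [h1, h2, h3, Polynomial.derivative_X_pow] <;> omega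

lemma conjT_map_star {α β : Type*} (A : Matrix α β ℂ) :
    (Aᴴ).map (starRingEnd ℂ) = Aᵀ := by
  ext i j; simp [Matrix.conjTranspose_apply, Matrix.map_apply]

lemma lk_comb (n k l : ℕ) (t : ℂ) :
    (LkI0 n k : Matrix _ _ ℂ) + t^l • LkI1 n k = lkRg n k l t := by
  ext ⟨i, r⟩ ⟨j, s⟩
  simp only [LkI0, LkI1, lkRg, Matrix.add_apply, Matrix.smul_apply, Matrix.of_apply,
    smul_eq_mul]
  by_cases h1 : r = s <;> by_cases h2 : (j:ℕ) = (i:ℕ) <;> by_cases h3 : (j:ℕ) = (i:ℕ)+1 <;>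
    simp [h1, h2, h3] <;> omega

lemma sum_split_scalar (l : ℕ) (hl : 1 ≤ l) (c : ℕ → ℂ) (a b : ℂ) :
    ∑ i ∈ Finset.range (l+1), c i * (if i = 0 then a else if i = l then b else 0) =
      c 0 * a + c l * b := by
  have h : ∀ i ∈ Finset.range (l+1),
      c i * (if i = 0 then a else if i = l then b else 0) =
        (if i = 0 then c i * a else 0) + (if i = l then c i * b else 0) := by
    intro i _
    by_cases h0 : i = 0 <;> by_cases h1 : i = l
    · exfalso; omega
    · simp [h0, h1, show (0:ℕ) ≠ l from by omega]
    · simp [h0, h1, show ¬ l = 0 from by omega]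
    · simp [h0, h1]
  rw [Finset.sum_congr rfl h, Finset.sum_add_distrib,
    Finset.sum_ite_eq' (Finset.range (l+1)) 0 (fun i => c i * a),
    Finset.sum_ite_eq' (Finset.range (l+1)) l (fun i => c i * b)]
  simp

lemma mpEval_Lcal (n l ε η : ℕ) (hl : 1 ≤ l)
    (M : ℕ → Matrix (Fin (η + 1) × Fin n) (Fin (ε + 1) × Fin n) ℂ) (t : ℂ) :
    mpEval l (LcalCoef n l ε η M) t =
      Matrix.fromBlocks (mpEval l M t) (lkRg n η l t)ᵀ (lkRg n ε l t) 0 := by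
  ext r c
  rcases r with a | a <;> rcases c with b | b <;>
    simp only [mpEval, LcalCoef, Matrix.sum_apply, Matrix.smul_apply,
      Matrix.fromBlocks_apply₁₁, Matrix.fromBlocks_apply₁₂, Matrix.fromBlocks_apply₂₁,
      Matrix.fromBlocks_apply₂₂, smul_eq_mul, Matrix.zero_apply, mul_zero,
      Finset.sum_const_zero]
  · rw [Finset.sum_congr rfl (fun i _ => by
      rw [show (if i = 0 then (LkI0 n η)ᵀ else if i = l then (LkI1 n η)ᵀ else 0) a b =
        (if i = 0 then (LkI0 n η)ᵀ a b else if i = l then (LkI1 n η)ᵀ a b else 0) from by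
          split_ifs <;> rfl])]
    rw [sum_split_scalar l hl (fun i => t ^ i) _ _, ← lk_comb n η l t]
    simp [Matrix.transpose_apply, Matrix.add_apply, Matrix.smul_apply]
    try ring
  · rw [Finset.sum_congr rfl (fun i _ => by
      rw [show (if i = 0 then LkI0 n ε else if i = l then LkI1 n ε else 0) a b =
        (if i = 0 then LkI0 n ε a b else if i = l then LkI1 n ε a b else 0) from by
          split_ifs <;> rfl])]
    rw [sum_split_scalar l hl (fun i => t ^ i) _ _, ← lk_comb n ε l t]
    simp [Matrix.add_apply, Matrix.smul_apply]
    try ring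

lemma mpDer_Lcal (n l ε η : ℕ) (hl : 1 ≤ l)
    (M : ℕ → Matrix (Fin (η + 1) × Fin n) (Fin (ε + 1) × Fin n) ℂ) (t : ℂ) :
    mpDer l (LcalCoef n l ε η M) t =
      Matrix.fromBlocks (mpDer l M t) (((l:ℂ) * t^(l-1)) • (LkI1 n η)ᵀ)
        (((l:ℂ) * t^(l-1)) • LkI1 n ε) 0 := by
  ext r c
  rcases r with a | a <;> rcases c with b | b <;>
    simp only [mpDer, LcalCoef, Matrix.sum_apply, Matrix.smul_apply,
      Matrix.fromBlocks_apply₁₁, Matrix.fromBlocks_apply₁₂, Matrix.fromBlocks_apply₂₁,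
      Matrix.fromBlocks_apply₂₂, smul_eq_mul, Matrix.zero_apply, mul_zero,
      Finset.sum_const_zero]
  · rw [Finset.sum_congr rfl (fun i _ => by
      rw [show (if i = 0 then (LkI0 n η)ᵀ else if i = l then (LkI1 n η)ᵀ else 0) a b =
        (if i = 0 then (LkI0 n η)ᵀ a b else if i = l then (LkI1 n η)ᵀ a b else 0) from by
          split_ifs <;> rfl])]
    rw [sum_split_scalar l hl (fun i => (i:ℂ) * t ^ (i-1)) _ _]
    simp [Matrix.transpose_apply]
  · rw [Finset.sum_congr rfl (fun i _ => by
      rw [show (if i = 0 then LkI0 n ε else if i = l then LkI1 n ε else 0) a b =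
        (if i = 0 then LkI0 n ε a b else if i = l then LkI1 n ε a b else 0) from by
          split_ifs <;> rfl])]
    rw [sum_split_scalar l hl (fun i => (i:ℂ) * t ^ (i-1)) _ _]
    simp

lemma gmat_eq (n l p q : ℕ) (N : ℂ → Matrix (Fin (q + 1) × Fin n) (Fin (p + 1) × Fin n) ℂ)
    (x : ℂ) :
    Gmat n l p q N x =
      Matrix.fromRows (x^(q*l) • LamI n p l x) (-(Smat n q l x * (N x * LamI n p l x))) := by
  ext (a | a) c
  · simp [Gmat, Matrix.fromRows_apply_inl, Matrix.smul_apply, smul_eq_mul]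
  · simp [Gmat, Matrix.fromRows_apply_inr]

lemma cmg_mulVec {n k : ℕ} (v : Fin n → ℂ) :
    (cmg n k : Matrix _ _ ℂ) *ᵥ v = fun p => if (p.1 : ℕ) = 0 then v p.2 else 0 := by
  funext ⟨i, r⟩
  simp only [cmg, Matrix.mulVec, Matrix.of_apply, dotProduct]
  by_cases hi : (i : ℕ) = 0
  · simp only [hi, true_and]
    rw [Finset.sum_eq_single r]
    · simp
    · intro b _ hb
      rw [if_neg (fun h => hb h.symm), zero_mul]
    · intro h; exact absurd (Finset.mem_univ r) h
  · simp [hi]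

lemma polyEq (n d l ε η : ℕ)
    (A : ℕ → Matrix (Fin n) (Fin n) ℂ)
    (M : ℕ → Matrix (Fin (η + 1) × Fin n) (Fin (ε + 1) × Fin n) ℂ)
    (hM : ∀ x : ℂ, (LamI n η l x)ᵀ * mpEval l M x * LamI n ε l x = mpEval d A x) :
    (lamR n η l (Polynomial.X : Polynomial ℂ))ᵀ *
      (pmat l M * lamR n ε l (Polynomial.X : Polynomial ℂ)) = pmat d A := by
  apply mat_funext
  intro t
  rw [Matrix.map_mul, Matrix.map_mul, Matrix.transpose_map, lamR_map, lamR_map,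
    pmat_map, pmat_map]
  have hx : (Polynomial.evalRingHom t) (Polynomial.X : Polynomial ℂ) = t := by simp
  rw [hx, ← Matrix.mul_assoc]
  exact hM t

lemma ct_t {α β : Type*} (A : Matrix α β ℂ) : (Aᴴ)ᵀ = A.map (starRingEnd ℂ) := by
  ext i j; rfl

lemma LamI_map_conj (n k l : ℕ) (μ : ℂ) :
    (LamI n k l ((starRingEnd ℂ) μ)).map (starRingEnd ℂ) = LamI n k l μ := by
  have h := lamR_map n k l ((starRingEnd ℂ) μ) (starRingEnd ℂ)
  rw [Complex.conj_conj] at h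
  exact h

lemma Smat_map_conj (n k l : ℕ) (μ : ℂ) :
    (Smat n k l ((starRingEnd ℂ) μ)).map (starRingEnd ℂ) = Smat n k l μ := by
  have h := sRg_map n k l ((starRingEnd ℂ) μ) (starRingEnd ℂ)
  rw [Complex.conj_conj] at h
  exact h

lemma gmat_star (n l p q : ℕ) (B : Matrix (Fin (p + 1) × Fin n) (Fin (q + 1) × Fin n) ℂ)
    (μ : ℂ) :
    ((Gmat n l p q (fun _ => Bᴴ) ((starRingEnd ℂ) μ))ᴴ)ᵀ = Gmat n l p q (fun _ => Bᵀ) μ := by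
  rw [ct_t, gmat_eq, gmat_eq, fromRows_map, mmap_smul, mmap_neg, Matrix.map_mul,
    Matrix.map_mul, LamI_map_conj, Smat_map_conj, conjT_map_star, map_pow,
    Complex.conj_conj]

end PolyAux

end Aux


/-- For a simple nonzero eigenvalue `lam0` of `P` with right/left eigenvectors `x`, `y`,
the vectors `z = G(lam0; ε, η, M) x` and
`w = [conj lam0 ^ (εℓ) (Λ_η(conj lam0 ^ ℓ) ⊗ I_n) ;
      −S_ε(conj lam0 ^ ℓ) M(lam0)* (Λ_η(conj lam0 ^ ℓ) ⊗ I_n)] y`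
are right/left eigenvectors of `ℒ` with eigenvalue `lam0`, and
`|w* ℒ′(lam0) z| = |lam0|^{d−ℓ} |y* P′(lam0) x|`. -/
theorem stmt14 (n d l ε η : ℕ) (hn : 0 < n) (hl : 1 ≤ l) (hd : d = l * (ε + η + 1))
    (A : ℕ → Matrix (Fin n) (Fin n) ℂ) (hdeg : A d ≠ 0)
    (hreg : detPoly n d A ≠ 0)
    (M : ℕ → Matrix (Fin (η + 1) × Fin n) (Fin (ε + 1) × Fin n) ℂ)
    (hM : ∀ x : ℂ, (LamI n η l x)ᵀ * mpEval l M x * LamI n ε l x = mpEval d A x)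
    (lam0 : ℂ) (hlam0 : lam0 ≠ 0)
    (hsimple : (detPoly n d A).rootMultiplicity lam0 = 1)
    (x y : Fin n → ℂ) (hx : x ≠ 0) (hy : y ≠ 0)
    (hPx : (mpEval d A lam0).mulVec x = 0)
    (hPy : (mpEval d A lam0).vecMul (star y) = 0)
    (z : ((Fin (ε + 1) × Fin n) ⊕ (Fin η × Fin n)) → ℂ)
    (w : ((Fin (η + 1) × Fin n) ⊕ (Fin ε × Fin n)) → ℂ)
    (hz : z = (Gmat n l ε η (mpEval l M) lam0).mulVec x)
    (hw : w = (Gmat n l η ε (fun _ => (mpEval l M lam0)ᴴ)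
                (starRingEnd ℂ lam0)).mulVec y) :
    z ≠ 0 ∧ w ≠ 0 ∧
      (mpEval l (LcalCoef n l ε η M) lam0).mulVec z = 0 ∧
      (mpEval l (LcalCoef n l ε η M) lam0).vecMul (star w) = 0 ∧
      ‖dotProduct (star w) ((mpDer l (LcalCoef n l ε η M) lam0).mulVec z)‖ =
        ‖lam0‖ ^ (d - l) *
          ‖dotProduct (star y) ((mpDer d A lam0).mulVec x)‖ := by
  have hMu : (LamI n η l lam0)ᵀ * (mpEval l M lam0 * LamI n ε l lam0) = mpEval d A lam0 := by
    rw [← Matrix.mul_assoc]; exact hM lam0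
  have hLm := mpEval_Lcal n l ε η hl M lam0
  have hLd := mpDer_Lcal n l ε η hl M lam0
  -- right eigenvector
  have hRprod : mpEval l (LcalCoef n l ε η M) lam0 * Gmat n l ε η (mpEval l M) lam0 =
      Matrix.fromRows ((cmg n η : Matrix _ _ ℂ) * mpEval d A lam0) 0 := by
    rw [hLm, gmat_eq]
    have h := gid n l ε η lam0 (mpEval l M lam0)
    rw [show (lamR n η l lam0)ᵀ * (mpEval l M lam0 * lamR n ε l lam0) = mpEval d A lam0
      from hMu] at h
    exact h
  have hz0 : (mpEval l (LcalCoef n l ε η M) lam0) *ᵥ z = 0 := by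
    rw [hz, Matrix.mulVec_mulVec, hRprod, Matrix.fromRows_mulVec,
      ← Matrix.mulVec_mulVec, hPx, Matrix.mulVec_zero, Matrix.zero_mulVec]
    funext r; rcases r with a | a <;> rfl
  -- star w
  have hsw : star w = Gmat n l η ε (fun _ => (mpEval l M lam0)ᵀ) lam0 *ᵥ (star y) := by
    rw [hw, Matrix.star_mulVec, ← Matrix.mulVec_transpose, gmat_star]
  -- left eigenvector
  have hTprod : (mpEval l (LcalCoef n l ε η M) lam0)ᵀ *
      Gmat n l η ε (fun _ => (mpEval l M lam0)ᵀ) lam0 =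
      Matrix.fromRows ((cmg n ε : Matrix _ _ ℂ) * (mpEval d A lam0)ᵀ) 0 := by
    rw [hLm, Matrix.fromBlocks_transpose, Matrix.transpose_transpose, Matrix.transpose_zero,
      gmat_eq]
    have h := gid n l η ε lam0 ((mpEval l M lam0)ᵀ)
    have h2 : (lamR n ε l lam0)ᵀ * ((mpEval l M lam0)ᵀ * lamR n η l lam0) =
        (mpEval d A lam0)ᵀ := by
      rw [← hMu, Matrix.transpose_mul, Matrix.transpose_mul, Matrix.transpose_transpose,
        Matrix.mul_assoc]
      rfl
    rw [h2] at h
    exact h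
  have hw0 : Matrix.vecMul (star w) (mpEval l (LcalCoef n l ε η M) lam0) = 0 := by
    rw [← Matrix.mulVec_transpose, hsw, Matrix.mulVec_mulVec, hTprod,
      Matrix.fromRows_mulVec, ← Matrix.mulVec_mulVec, Matrix.mulVec_transpose, hPy,
      Matrix.mulVec_zero, Matrix.zero_mulVec]
    funext r; rcases r with a | a <;> rfl
  -- nonzero z
  obtain ⟨s0, hs0⟩ : ∃ s, x s ≠ 0 := by
    by_contra hcon; push_neg at hcon; exact hx (funext fun s => hcon s)
  have hzval : z (Sum.inl (⟨ε, Nat.lt_succ_self ε⟩, s0)) = lam0 ^ (η * l) * x s0 := by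
    rw [hz]
    simp only [Matrix.mulVec, Gmat, Matrix.of_apply, Sum.elim_inl, dotProduct, LamI]
    rw [Finset.sum_eq_single s0]
    · simp [Nat.sub_self]
    · intro b _ hb
      rw [if_neg (fun h => hb h.symm), mul_zero, zero_mul]
    · intro h; exact absurd (Finset.mem_univ s0) h
  have hz_ne : z ≠ 0 := by
    intro h0
    have h1 : lam0 ^ (η * l) * x s0 = 0 := by
      rw [← hzval, h0]; rfl
    rcases mul_eq_zero.mp h1 with h2 | h2
    · exact pow_ne_zero _ hlam0 h2
    · exact hs0 h2
  -- nonzero w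
  obtain ⟨t0, ht0⟩ : ∃ s, y s ≠ 0 := by
    by_contra hcon; push_neg at hcon; exact hy (funext fun s => hcon s)
  have hwval : w (Sum.inl (⟨η, Nat.lt_succ_self η⟩, t0)) =
      ((starRingEnd ℂ) lam0) ^ (ε * l) * y t0 := by
    rw [hw]
    simp only [Matrix.mulVec, Gmat, Matrix.of_apply, Sum.elim_inl, dotProduct, LamI]
    rw [Finset.sum_eq_single t0]
    · simp [Nat.sub_self]
    · intro b _ hb
      rw [if_neg (fun h => hb h.symm), mul_zero, zero_mul]
    · intro h; exact absurd (Finset.mem_univ t0) h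
  have hconj : (starRingEnd ℂ) lam0 ≠ 0 := by
    rw [starRingEnd_apply]
    exact fun h => hlam0 (star_eq_zero.mp h)
  have hw_ne : w ≠ 0 := by
    intro h0
    have h1 : ((starRingEnd ℂ) lam0) ^ (ε * l) * y t0 = 0 := by
      rw [← hwval, h0]; rfl
    rcases mul_eq_zero.mp h1 with h2 | h2
    · exact pow_ne_zero _ hconj h2
    · exact ht0 h2
  -- derivative identity
  have pe := polyEq n d l ε η A M hM
  have pid : Matrix.fromBlocks (pmat l M) (lkRg n η l (Polynomial.X : Polynomial ℂ))ᵀ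
        (lkRg n ε l (Polynomial.X : Polynomial ℂ)) 0 *
      Matrix.fromRows ((Polynomial.X : Polynomial ℂ)^(η*l) •
          lamR n ε l (Polynomial.X : Polynomial ℂ))
        (-(sRg n η l (Polynomial.X : Polynomial ℂ) *
          (pmat l M * lamR n ε l (Polynomial.X : Polynomial ℂ)))) =
      Matrix.fromRows ((cmg n η : Matrix _ _ (Polynomial ℂ)) * pmat d A) 0 := by
    rw [gid, pe]
  have pidD : dmat (Matrix.fromBlocks (pmat l M) (lkRg n η l (Polynomial.X : Polynomial ℂ))ᵀ
        (lkRg n ε l (Polynomial.X : Polynomial ℂ)) 0) *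
      Matrix.fromRows ((Polynomial.X : Polynomial ℂ)^(η*l) •
          lamR n ε l (Polynomial.X : Polynomial ℂ))
        (-(sRg n η l (Polynomial.X : Polynomial ℂ) *
          (pmat l M * lamR n ε l (Polynomial.X : Polynomial ℂ)))) +
      Matrix.fromBlocks (pmat l M) (lkRg n η l (Polynomial.X : Polynomial ℂ))ᵀ
        (lkRg n ε l (Polynomial.X : Polynomial ℂ)) 0 *
      dmat (Matrix.fromRows ((Polynomial.X : Polynomial ℂ)^(η*l) •
          lamR n ε l (Polynomial.X : Polynomial ℂ))
        (-(sRg n η l (Polynomial.X : Polynomial ℂ) *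
          (pmat l M * lamR n ε l (Polynomial.X : Polynomial ℂ))))) =
      Matrix.fromRows ((cmg n η : Matrix _ _ (Polynomial ℂ)) * dmat (pmat d A)) 0 := by
    have h := congrArg dmat pid
    rw [dmat_mul] at h
    conv_rhs at h => rw [dmat_fromRows, dmat_zero, dmat_mul, dmat_cmg, Matrix.zero_mul,
      zero_add]
    exact h
  have hX : (Polynomial.evalRingHom lam0) (Polynomial.X : Polynomial ℂ) = lam0 := by simp
  have e1 : (dmat (Matrix.fromBlocks (pmat l M)
        (lkRg n η l (Polynomial.X : Polynomial ℂ))ᵀ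
        (lkRg n ε l (Polynomial.X : Polynomial ℂ)) 0)).map (Polynomial.evalRingHom lam0) =
      mpDer l (LcalCoef n l ε η M) lam0 := by
    rw [dmat_fromBlocks, dmat_transpose, dmat_zero, Matrix.fromBlocks_map,
      Matrix.transpose_map, dmat_lk_map, dmat_lk_map, pmat_dmat_map,
      Matrix.map_zero _ (map_zero _), hLd, Matrix.transpose_smul]
  have e3 : (Matrix.fromBlocks (pmat l M) (lkRg n η l (Polynomial.X : Polynomial ℂ))ᵀ
        (lkRg n ε l (Polynomial.X : Polynomial ℂ)) 0).map (Polynomial.evalRingHom lam0) =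
      mpEval l (LcalCoef n l ε η M) lam0 := by
    rw [Matrix.fromBlocks_map, Matrix.transpose_map, lkRg_map, lkRg_map, pmat_map, hX,
      Matrix.map_zero _ (map_zero _), hLm]
  have e2 : (Matrix.fromRows ((Polynomial.X : Polynomial ℂ)^(η*l) •
        lamR n ε l (Polynomial.X : Polynomial ℂ))
        (-(sRg n η l (Polynomial.X : Polynomial ℂ) *
          (pmat l M * lamR n ε l (Polynomial.X : Polynomial ℂ))))).map
        (Polynomial.evalRingHom lam0) =
      Gmat n l ε η (mpEval l M) lam0 := by
    rw [_root_.fromRows_map, mmap_smul, mmap_neg, Matrix.map_mul, Matrix.map_mul, lamR_map,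
      sRg_map, pmat_map, map_pow, hX, gmat_eq]
    rfl
  have e4 : (((cmg n η : Matrix _ _ (Polynomial ℂ)) * dmat (pmat d A)) :
        Matrix _ _ (Polynomial ℂ)).map (Polynomial.evalRingHom lam0) =
      (cmg n η : Matrix _ _ ℂ) * mpDer d A lam0 := by
    rw [Matrix.map_mul, cmg_map, pmat_dmat_map]
  obtain ⟨Zd, hEQ⟩ : ∃ Zd : Matrix ((Fin (ε+1) × Fin n) ⊕ (Fin η × Fin n))
      (Fin n) ℂ,
      mpDer l (LcalCoef n l ε η M) lam0 * Gmat n l ε η (mpEval l M) lam0 +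
        mpEval l (LcalCoef n l ε η M) lam0 * Zd =
      Matrix.fromRows ((cmg n η : Matrix _ _ ℂ) * mpDer d A lam0) 0 := by
    refine ⟨(dmat (Matrix.fromRows ((Polynomial.X : Polynomial ℂ)^(η*l) •
        lamR n ε l (Polynomial.X : Polynomial ℂ))
        (-(sRg n η l (Polynomial.X : Polynomial ℂ) *
          (pmat l M * lamR n ε l (Polynomial.X : Polynomial ℂ)))))).map
        (Polynomial.evalRingHom lam0), ?_⟩
    rw [← e1, ← e2, ← e3, ← e4, ← Matrix.map_mul, ← Matrix.map_mul, ← mmap_add]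
    rw [show Matrix.fromRows (((cmg n η : Matrix _ _ (Polynomial ℂ)) * dmat (pmat d A)).map
        (Polynomial.evalRingHom lam0)) 0 = (Matrix.fromRows ((cmg n η : Matrix _ _ (Polynomial ℂ)) * dmat (pmat d A))
        (0 : Matrix (Fin ε × Fin n) (Fin n) (Polynomial ℂ))).map (Polynomial.evalRingHom lam0)
      from by rw [_root_.fromRows_map, Matrix.map_zero _ (map_zero _)]]
    rw [pidD]
  -- entries of star w in the top block
  have hswv : ∀ r : Fin n, star w (Sum.inl ((⟨0, Nat.succ_pos η⟩ : Fin (η+1)), r)) =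
      lam0 ^ (ε*l) * lam0 ^ (l*η) * (star y) r := by
    intro r
    rw [hsw]
    simp only [Matrix.mulVec, Gmat, Matrix.of_apply, Sum.elim_inl, dotProduct, LamI]
    rw [Finset.sum_eq_single r]
    · simp only [eq_self_iff_true, if_true, Nat.sub_zero]
      try ring
    · intro b _ hb
      rw [if_neg (fun h => hb h.symm), mul_zero, zero_mul]
    · intro h; exact absurd (Finset.mem_univ r) h
  -- the derivative dot product
  have hdot : dotProduct (star w)
      ((mpDer l (LcalCoef n l ε η M) lam0) *ᵥ z) =
      lam0 ^ (ε*l) * lam0 ^ (l*η) *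
        dotProduct (star y) ((mpDer d A lam0) *ᵥ x) := by
    have h5 := congrArg (fun m : Matrix _ _ ℂ => dotProduct (star w) (m *ᵥ x)) hEQ
    rw [Matrix.add_mulVec, dotProduct_add, ← Matrix.mulVec_mulVec,
      ← Matrix.mulVec_mulVec, ← hz,
      dotProduct_mulVec (star w) (mpEval l (LcalCoef n l ε η M) lam0) (Zd *ᵥ x), hw0,
      zero_dotProduct, add_zero, Matrix.fromRows_mulVec,
      ← Matrix.mulVec_mulVec, Matrix.zero_mulVec] at h5
    rw [h5, cmg_mulVec]
    rw [dotProduct, Fintype.sum_sum_type]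
    have hinr : ∀ b : Fin ε × Fin n,
        star w (Sum.inr b) * (Sum.elim (fun p : Fin (η+1) × Fin n =>
          if (p.1 : ℕ) = 0 then ((mpDer d A lam0) *ᵥ x) p.2 else 0)
          (0 : Fin ε × Fin n → ℂ) (Sum.inr b)) = 0 := by
      intro b; simp
    rw [Finset.sum_congr rfl (fun b _ => hinr b), Finset.sum_const_zero, add_zero,
      Fintype.sum_prod_type]
    have hinner : ∀ i : Fin (η+1),
        ∑ r : Fin n, star w (Sum.inl (i, r)) * (Sum.elim (fun p : Fin (η+1) × Fin n =>
          if (p.1 : ℕ) = 0 then ((mpDer d A lam0) *ᵥ x) p.2 else 0)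
          (0 : Fin ε × Fin n → ℂ) (Sum.inl (i, r))) =
        if (i : ℕ) = 0 then
          ∑ r : Fin n, star w (Sum.inl (i, r)) * ((mpDer d A lam0) *ᵥ x) r else 0 := by
      intro i
      by_cases hi : (i : ℕ) = 0
      · simp [hi, Fin.val_eq_zero_iff.mp hi]
      · simp [hi, show i ≠ 0 from fun h => hi (by simp [h])]
    rw [Finset.sum_congr rfl (fun i _ => hinner i), fin_sum_val 0
      (fun i : Fin (η+1) => ∑ r : Fin n, star w (Sum.inl (i, r)) *
        ((mpDer d A lam0) *ᵥ x) r)]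
    rw [dif_pos (Nat.succ_pos η)]
    rw [Finset.sum_congr rfl (fun r _ => by rw [hswv r])]
    rw [dotProduct, Finset.mul_sum]
    exact Finset.sum_congr rfl fun r _ => by ring
  refine ⟨hz_ne, hw_ne, hz0, hw0, ?_⟩
  have hdl : d - l = ε*l + l*η := by
    rw [hd, show l * (ε+η+1) = ε*l + l*η + l from by ring, Nat.add_sub_cancel]
  rw [hdot, norm_mul, norm_mul, norm_pow, norm_pow, hdl, pow_add]
  try ring


end
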